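/- Let h = 2^t with 1 ≤ t ≤ r and let d_0, …, d_{h−1} ∈ F. Set d_i^d := d_i · ∏_{j ∈ I_i} W'_j for 0 ≤ i < h, where I_i = {l : 0 ≤ l ≤ t−1 and bit l of i equals 1}. Then the formal derivative of Σ_{i=0}^{h−1} d_i·X_i equals Σ_{j=0}^{h−1} ((Σ_{l ∈ I_j^c} d_{j+2^l}^d) / (∏_{m ∈ I_j} W'_m)) · X_j, where I_j^c = {l : 0 ≤ l ≤ t−1 and bit l of j equals 0}; here each W'_m is nonzero so the division is well defined. -/

import Mathlib

open Polynomial Finset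

attribute [local instance] ZMod.algebra

/-- `ω_i = Σ_{j<r} i_j · v_j`, where `i_j` are the binary digits of `i`. -/
noncomputable def omegaF {F : Type*} [Field F] {r : ℕ} (v : Fin r → F) (i : ℕ) : F :=
  ∑ j : Fin r, if Nat.testBit i (j : ℕ) then v j else 0

/-- The subspace vanishing polynomial `W_j(X) = ∏_{i=0}^{2^j-1} (X - ω_i)`. -/
noncomputable def Wpoly {F : Type*} [Field F] {r : ℕ} (v : Fin r → F) (j : ℕ) : Polynomial F :=
  ∏ i ∈ Finset.range (2 ^ j), (Polynomial.X - Polynomial.C (omegaF v i))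

/-- The basis polynomial `X_i(X) = ∏_{j<r} (W_j(X)/W_j(ω_{2^j}))^{i_j}`. -/
noncomputable def Xpoly {F : Type*} [Field F] {r : ℕ} (v : Fin r → F) (i : ℕ) : Polynomial F :=
  ∏ j ∈ Finset.range r,
    if Nat.testBit i j then
      Polynomial.C (((Wpoly v j).eval (omegaF v (2 ^ j)))⁻¹) * Wpoly v j
    else 1

/-- The recursively defined polynomials `Δ_i^m`:
`Δ_t^m = C (d m)` and `Δ_i^m = Δ_{i+1}^m + (W_i/W_i(ω_{2^i})) · Δ_{i+1}^{m+2^i}` for `i < t`. -/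
noncomputable def Delta {F : Type*} [Field F] {r : ℕ} (v : Fin r → F) (d : ℕ → F)
    (t i m : ℕ) : Polynomial F :=
  if i < t then
    Delta v d t (i + 1) m +
      Polynomial.C (((Wpoly v i).eval (omegaF v (2 ^ i)))⁻¹) * Wpoly v i *
        Delta v d t (i + 1) (m + 2 ^ i)
  else Polynomial.C (d m)
termination_by t - i
decreasing_by all_goals omega

/-- The constant `W'_l = (∏_{j=1}^{2^l-1} ω_j) / W_l(ω_{2^l})`. -/
noncomputable def Wd {F : Type*} [Field F] {r : ℕ} (v : Fin r → F) (l : ℕ) : F :=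
  (∏ j ∈ Finset.Ico 1 (2 ^ l), omegaF v j) / (Wpoly v l).eval (omegaF v (2 ^ l))

/-- `d_i^d = d_i · ∏_{j ∈ I_i} W'_j`, where `I_i` is the set of `0 ≤ l ≤ t-1` with
bit `l` of `i` equal to `1`. -/
noncomputable def dDeriv {F : Type*} [Field F] {r : ℕ} (v : Fin r → F) (d : ℕ → F)
    (t i : ℕ) : F :=
  d i * ∏ l ∈ Finset.range t, if Nat.testBit i l then Wd v l else 1


lemma bit_add_pow {i l : ℕ} (h : i.testBit l = false) (m : ℕ) :
    (i + 2 ^ l).testBit m = if m = l then true else i.testBit m := by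
  have hpos : 0 < 2 ^ (l + 1) := Nat.pow_pos (by norm_num)
  have hbl : i % 2 ^ (l + 1) < 2 ^ l := by
    have h1 : i % 2 ^ (l + 1) < 2 ^ (l + 1) := Nat.mod_lt _ hpos
    by_contra hge
    push_neg at hge
    have hp : (2:ℕ) ^ (l + 1) = 2 ^ l + 2 ^ l := by rw [pow_succ]; omega
    have h2 : i % 2 ^ (l + 1) - 2 ^ l < 2 ^ l := by omega
    have h3 := Nat.testBit_two_pow_add_eq (i % 2 ^ (l + 1) - 2 ^ l) l
    rw [show 2 ^ l + (i % 2 ^ (l + 1) - 2 ^ l) = i % 2 ^ (l + 1) by omega,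
      Nat.testBit_lt_two_pow h2] at h3
    have h4 : (i % 2 ^ (l + 1)).testBit l = false := by
      simp [Nat.testBit_mod_two_pow, h]
    rw [h4] at h3
    simp at h3
  have hi : i = 2 ^ (l + 1) * (i / 2 ^ (l + 1)) + i % 2 ^ (l + 1) :=
    (Nat.div_add_mod i (2 ^ (l + 1))).symm
  set a := i / 2 ^ (l + 1)
  set b := i % 2 ^ (l + 1)
  have hp : (2:ℕ) ^ (l + 1) = 2 ^ l + 2 ^ l := by rw [pow_succ]; omega
  have hb2 : b < 2 ^ (l + 1) := by omega
  have hb2' : b + 2 ^ l < 2 ^ (l + 1) := by omega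
  rw [hi, show 2 ^ (l + 1) * a + b + 2 ^ l = 2 ^ (l + 1) * a + (b + 2 ^ l) by omega,
    Nat.testBit_two_pow_mul_add a hb2' m, Nat.testBit_two_pow_mul_add a hb2 m]
  rcases lt_trichotomy m l with hm | hm | hm
  · rw [if_neg hm.ne, if_pos (by omega), if_pos (by omega), add_comm b (2 ^ l),
      Nat.testBit_two_pow_add_gt hm]
  · subst hm
    rw [if_pos rfl, if_pos (by omega), add_comm b (2 ^ m), Nat.testBit_two_pow_add_eq,
      Nat.testBit_lt_two_pow hbl]
    rfl
  · rw [if_neg hm.ne', if_neg (by omega), if_neg (by omega)]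

lemma sub_bit {i l : ℕ} (h : i.testBit l = true) : (i - 2 ^ l).testBit l = false := by
  have hge := Nat.ge_two_pow_of_testBit h
  have h2 := Nat.testBit_two_pow_add_eq (i - 2 ^ l) l
  rw [show 2 ^ l + (i - 2 ^ l) = i by omega, h] at h2
  simpa using h2.symm

lemma add_pow_lt {j l t : ℕ} (hj : j < 2 ^ t) (hl : l < t) (h : j.testBit l = false) :
    j + 2 ^ l < 2 ^ t := by
  apply Nat.lt_pow_two_of_testBit
  intro m hm
  rw [bit_add_pow h m, if_neg (by omega)]
  exact Nat.testBit_lt_two_pow (lt_of_lt_of_le hj (Nat.pow_le_pow_right (by norm_num) hm))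
section Helpers

set_option linter.unusedSectionVars false

variable {F : Type*} [Field F] [CharP F 2] {r : ℕ} (v : Fin r → F)

lemma omegaF_zero : omegaF v 0 = 0 := by
  simp [omegaF]

lemma omegaF_two_pow {l : ℕ} (hl : l < r) : omegaF v (2 ^ l) = v ⟨l, hl⟩ := by
  unfold omegaF
  rw [Finset.sum_congr rfl (fun j _ => show (if (2 ^ l).testBit (j : ℕ) then v j else 0)
      = if j = ⟨l, hl⟩ then v j else 0 by
    simp [Nat.testBit_two_pow, Fin.ext_iff, eq_comm])]
  simp

lemma omegaF_add {l : ℕ} (hl : l < r) {i : ℕ} (h : i.testBit l = false) :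
    omegaF v (i + 2 ^ l) = omegaF v i + v ⟨l, hl⟩ := by
  unfold omegaF
  have key : ∀ j : Fin r, (if (i + 2 ^ l).testBit (j : ℕ) then v j else 0)
      = (if i.testBit (j : ℕ) then v j else 0) + (if j = ⟨l, hl⟩ then v j else 0) := by
    intro j
    rw [bit_add_pow h]
    by_cases hj : (j : ℕ) = l
    · simp [hj, h, Fin.ext_iff]
    · simp [hj, Fin.ext_iff]
  rw [Finset.sum_congr rfl (fun j _ => key j), Finset.sum_add_distrib]
  simp

lemma omegaF_ne_zero (hv : LinearIndependent (ZMod 2) v) {k : ℕ} (h0 : k ≠ 0)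
    (hk : k < 2 ^ r) : omegaF v k ≠ 0 := by
  intro hzero
  rw [Fintype.linearIndependent_iff] at hv
  have hg := hv (fun j => if k.testBit (j : ℕ) then 1 else 0) ?_
  · have hbit : ∀ j : Fin r, k.testBit (j : ℕ) = false := by
      intro j
      by_contra hb
      have h1 := hg j
      rw [if_pos (by simpa using hb)] at h1
      exact one_ne_zero h1
    apply h0
    apply Nat.eq_of_testBit_eq
    intro m
    rw [Nat.zero_testBit]
    by_cases hm : m < r
    · exact hbit ⟨m, hm⟩
    · exact Nat.testBit_lt_two_pow
        (lt_of_lt_of_le hk (Nat.pow_le_pow_right (by norm_num) (by omega)))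
  · rw [← hzero]
    unfold omegaF
    apply Finset.sum_congr rfl
    intro j _
    by_cases hc : k.testBit (j : ℕ) <;> simp [hc]

lemma Wpoly_zero : Wpoly v 0 = Polynomial.X := by
  simp [Wpoly, omegaF_zero]

lemma char_two_poly : (2 : Polynomial F) = 0 := by
  exact_mod_cast CharP.cast_eq_zero (Polynomial F) 2

lemma Wpoly_split {l : ℕ} (hl : l < r) :
    Wpoly v (l + 1) = Wpoly v l * (Wpoly v l).comp (Polynomial.X + Polynomial.C (v ⟨l, hl⟩)) := by
  have h2p := char_two_poly (F := F)
  have h2 : (2:ℕ) ^ (l + 1) = 2 ^ l + 2 ^ l := by rw [pow_succ]; omega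
  rw [show Wpoly v (l+1) = ∏ i ∈ Finset.range (2 ^ (l+1)),
      (Polynomial.X - Polynomial.C (omegaF v i)) from rfl, h2, Finset.prod_range_add]
  congr 1
  rw [show Wpoly v l = ∏ i ∈ Finset.range (2 ^ l),
        (Polynomial.X - Polynomial.C (omegaF v i)) from rfl, Polynomial.prod_comp]
  apply Finset.prod_congr rfl
  intro i hi
  have hib : i.testBit l = false := Nat.testBit_lt_two_pow (Finset.mem_range.1 hi)
  rw [Polynomial.sub_comp, Polynomial.X_comp, Polynomial.C_comp,
    show (2:ℕ) ^ l + i = i + 2 ^ l from add_comm _ _, omegaF_add v hl hib, Polynomial.C_add]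
  linear_combination (-(Polynomial.C (v ⟨l, hl⟩))) * h2p

lemma Wpoly_key : ∀ l ≤ r, ∀ y : F, (Wpoly v l).comp (Polynomial.X + Polynomial.C y)
    = Wpoly v l + Polynomial.C ((Wpoly v l).eval y) := by
  intro l
  induction l with
  | zero =>
    intro _ y
    simp [Wpoly_zero]
  | succ l ih =>
    intro hl y
    have hlr : l < r := hl
    have h2p := char_two_poly (F := F)
    have hW := ih hlr.le
    have hsp2 : Wpoly v (l + 1) = Wpoly v l *
        (Wpoly v l + Polynomial.C ((Wpoly v l).eval (v ⟨l, hlr⟩))) := by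
      rw [Wpoly_split v hlr, hW]
    rw [hsp2, Polynomial.mul_comp, Polynomial.add_comp, Polynomial.C_comp, hW y,
      Polynomial.eval_mul, Polynomial.eval_add, Polynomial.eval_C, map_mul, map_add]
    linear_combination (Wpoly v l * Polynomial.C ((Wpoly v l).eval y)) * h2p

lemma Wpoly_derivative : ∀ l ≤ r, Polynomial.derivative (Wpoly v l)
    = Polynomial.C (∏ j ∈ Finset.Ico 1 (2 ^ l), omegaF v j) := by
  intro l
  induction l with
  | zero =>
    simp [Wpoly_zero]
  | succ l ih =>
    intro hl
    have hlr : l < r := hl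
    have h2p := char_two_poly (F := F)
    have hsp2 : Wpoly v (l + 1) = Wpoly v l *
        (Wpoly v l + Polynomial.C ((Wpoly v l).eval (v ⟨l, hlr⟩))) := by
      rw [Wpoly_split v hlr, Wpoly_key v l hlr.le]
    have hP' : (∏ j ∈ Finset.Ico 1 (2 ^ (l + 1)), omegaF v j)
        = (∏ j ∈ Finset.Ico 1 (2 ^ l), omegaF v j) * (Wpoly v l).eval (v ⟨l, hlr⟩) := by
      rw [← Finset.prod_Ico_consecutive (fun j => omegaF v j)
        (show 1 ≤ 2 ^ l from Nat.one_le_two_pow)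
        (show (2:ℕ) ^ l ≤ 2 ^ (l + 1) by rw [pow_succ]; omega)]
      congr 1
      rw [Finset.prod_Ico_eq_prod_range, show (2:ℕ) ^ (l + 1) - 2 ^ l = 2 ^ l by
        rw [pow_succ]; omega]
      simp only [Wpoly, Polynomial.eval_prod, Polynomial.eval_sub, Polynomial.eval_X,
        Polynomial.eval_C]
      apply Finset.prod_congr rfl
      intro i hi
      have hib : i.testBit l = false := Nat.testBit_lt_two_pow (Finset.mem_range.1 hi)
      rw [add_comm (2 ^ l) i, omegaF_add v hlr hib, sub_eq_add_neg, CharTwo.neg_eq, add_comm]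
    rw [hsp2, Polynomial.derivative_mul, Polynomial.derivative_add, Polynomial.derivative_C,
      add_zero, ih hlr.le, hP', map_mul]
    linear_combination (Wpoly v l * Polynomial.C (∏ j ∈ Finset.Ico 1 (2 ^ l), omegaF v j)) * h2p

lemma Wpoly_eval_ne (hv : LinearIndependent (ZMod 2) v) {l : ℕ} (hl : l < r) :
    (Wpoly v l).eval (omegaF v (2 ^ l)) ≠ 0 := by
  simp only [Wpoly, Polynomial.eval_prod, Polynomial.eval_sub, Polynomial.eval_X,
    Polynomial.eval_C]
  rw [Finset.prod_ne_zero_iff]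
  intro i hi
  have hi' := Finset.mem_range.1 hi
  have hib : i.testBit l = false := Nat.testBit_lt_two_pow hi'
  rw [omegaF_two_pow v hl,
    show v ⟨l, hl⟩ - omegaF v i = omegaF v (i + 2 ^ l) by
      rw [omegaF_add v hl hib, sub_eq_add_neg, CharTwo.neg_eq, add_comm]]
  apply omegaF_ne_zero v hv (by positivity)
  have h1 : i + 2 ^ l < 2 ^ (l + 1) := by rw [pow_succ]; omega
  exact lt_of_lt_of_le h1 (Nat.pow_le_pow_right (by norm_num) (by omega))

lemma Wd_ne_zero (hv : LinearIndependent (ZMod 2) v) {l : ℕ} (hl : l < r) :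
    Wd v l ≠ 0 := by
  rw [Wd]
  apply div_ne_zero
  · rw [Finset.prod_ne_zero_iff]
    intro j hj
    rw [Finset.mem_Ico] at hj
    have h2 : (2:ℕ) ^ l < 2 ^ r := Nat.pow_lt_pow_right (by norm_num) hl
    exact omegaF_ne_zero v hv (by omega) (by omega)
  · exact Wpoly_eval_ne v hv hl

lemma derivative_finset_prod {R : Type*} [CommSemiring R] {ι : Type*} [DecidableEq ι]
    (s : Finset ι) (f : ι → Polynomial R) :
    Polynomial.derivative (∏ i ∈ s, f i)
      = ∑ i ∈ s, (∏ j ∈ s.erase i, f j) * Polynomial.derivative (f i) := by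
  classical
  induction s using Finset.induction_on with
  | empty => simp
  | @insert a s ha ih =>
    rw [Finset.prod_insert ha, Polynomial.derivative_mul, Finset.sum_insert ha,
      Finset.erase_insert ha, ih, Finset.mul_sum]
    rw [Finset.sum_congr rfl (fun i hi => show (∏ j ∈ (insert a s).erase i, f j)
          * Polynomial.derivative (f i)
        = f a * ((∏ j ∈ s.erase i, f j) * Polynomial.derivative (f i)) by
      rw [Finset.erase_insert_of_ne (by rintro rfl; exact ha hi),
        Finset.prod_insert (fun hc => ha (Finset.mem_of_mem_erase hc)), mul_assoc])]
    ring

lemma Xpoly_deriv (i : ℕ) : Polynomial.derivative (Xpoly v i)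
    = ∑ l ∈ Finset.range r, if i.testBit l then
        Polynomial.C (Wd v l) * Xpoly v (i - 2 ^ l) else 0 := by
  rw [show Xpoly v i = ∏ j ∈ Finset.range r, (if Nat.testBit i j then
      Polynomial.C (((Wpoly v j).eval (omegaF v (2 ^ j)))⁻¹) * Wpoly v j else 1) from rfl,
    derivative_finset_prod]
  apply Finset.sum_congr rfl
  intro l hl
  have hlr : l < r := Finset.mem_range.1 hl
  by_cases hb : i.testBit l
  · rw [if_pos hb, if_pos hb, Polynomial.derivative_C_mul, Wpoly_derivative v l hlr.le]
    have hC : Polynomial.C (((Wpoly v l).eval (omegaF v (2 ^ l)))⁻¹)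
        * Polynomial.C (∏ j ∈ Finset.Ico 1 (2 ^ l), omegaF v j) = Polynomial.C (Wd v l) := by
      rw [← Polynomial.C_mul]
      congr 1
      rw [Wd, div_eq_mul_inv, mul_comm]
    have hbit0 : (i - 2 ^ l).testBit l = false := sub_bit hb
    have hadd : (i - 2 ^ l) + 2 ^ l = i := by
      have := Nat.ge_two_pow_of_testBit hb
      omega
    have hx : Xpoly v (i - 2 ^ l) = ∏ j ∈ (Finset.range r).erase l,
        (if Nat.testBit i j then
          Polynomial.C (((Wpoly v j).eval (omegaF v (2 ^ j)))⁻¹) * Wpoly v j else 1) := by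
      rw [show Xpoly v (i - 2 ^ l) = ∏ j ∈ Finset.range r, (if Nat.testBit (i - 2 ^ l) j then
          Polynomial.C (((Wpoly v j).eval (omegaF v (2 ^ j)))⁻¹) * Wpoly v j else 1) from rfl,
        ← Finset.prod_erase (Finset.range r) (by rw [hbit0]; simp)]
      apply Finset.prod_congr rfl
      intro m hm
      have hml : m ≠ l := Finset.ne_of_mem_erase hm
      have : i.testBit m = (i - 2 ^ l).testBit m := by
        conv_lhs => rw [← hadd]
        rw [bit_add_pow hbit0, if_neg hml]
      rw [this]
    rw [hx, ← hC]
    ring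
  · rw [if_neg hb, if_neg hb, Polynomial.derivative_one, mul_zero]
end Helpers

/-- With `h = 2^t`, `d_i^d := d_i · ∏_{j ∈ I_i} W'_j`, each `W'_m` is nonzero and
the formal derivative of `Σ_{i<h} d_i · X_i` equals
`Σ_{j<h} ((Σ_{l ∈ I_j^c} d_{j+2^l}^d) / (∏_{m ∈ I_j} W'_m)) · X_j`. -/
theorem statement14 (r : ℕ) (hr : 1 ≤ r) (F : Type*) [Field F] [Fintype F] [CharP F 2]
    (hcard : Fintype.card F = 2 ^ r) (v : Fin r → F)
    (hv : LinearIndependent (ZMod 2) v) (t : ℕ) (ht1 : 1 ≤ t) (htr : t ≤ r) (d : ℕ → F) :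
    (∀ l ≤ r - 1, Wd v l ≠ 0)
    ∧ Polynomial.derivative (∑ i ∈ Finset.range (2 ^ t), Polynomial.C (d i) * Xpoly v i)
      = ∑ j ∈ Finset.range (2 ^ t),
          Polynomial.C
              ((∑ l ∈ Finset.range t, if Nat.testBit j l then 0 else dDeriv v d t (j + 2 ^ l))
                / (∏ m ∈ Finset.range t, if Nat.testBit j m then Wd v m else 1))
            * Xpoly v j := by
  have hWdne : ∀ l < r, Wd v l ≠ 0 := fun l hl => Wd_ne_zero v hv hl
  constructor
  · intro l hl
    exact hWdne l (by omega)
  have hPne : ∀ j : ℕ, (∏ m ∈ Finset.range t, if Nat.testBit j m then Wd v m else 1) ≠ 0 := by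
    intro j
    rw [Finset.prod_ne_zero_iff]
    intro m hm
    by_cases hb : Nat.testBit j m
    · rw [if_pos hb]
      exact hWdne m (lt_of_lt_of_le (Finset.mem_range.1 hm) htr)
    · rw [if_neg hb]
      exact one_ne_zero
  have hdd : ∀ j l, l < t → Nat.testBit j l = false →
      dDeriv v d t (j + 2 ^ l)
        = d (j + 2 ^ l) * Wd v l * ∏ m ∈ Finset.range t, (if Nat.testBit j m then Wd v m else 1) := by
    intro j l hlt hb
    have hl : l ∈ Finset.range t := Finset.mem_range.2 hlt
    have hprod : (∏ m ∈ Finset.range t, if Nat.testBit (j + 2 ^ l) m then Wd v m else 1)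
        = Wd v l * ∏ m ∈ Finset.range t, (if Nat.testBit j m then Wd v m else 1) := by
      calc (∏ m ∈ Finset.range t, if Nat.testBit (j + 2 ^ l) m then Wd v m else 1)
          = (if Nat.testBit (j + 2 ^ l) l then Wd v l else 1) *
            ∏ m ∈ (Finset.range t).erase l, (if Nat.testBit (j + 2 ^ l) m then Wd v m else 1) :=
            (Finset.mul_prod_erase _ _ hl).symm
        _ = Wd v l * ∏ m ∈ (Finset.range t).erase l, (if Nat.testBit j m then Wd v m else 1) := by
            congr 1
            · simp [bit_add_pow hb]
            · apply Finset.prod_congr rfl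
              intro m hm
              rw [bit_add_pow hb, if_neg (Finset.ne_of_mem_erase hm)]
        _ = Wd v l * ∏ m ∈ Finset.range t, (if Nat.testBit j m then Wd v m else 1) := by
            congr 1
            exact Finset.prod_erase _ (by simp [hb])
    rw [show dDeriv v d t (j + 2 ^ l) = d (j + 2 ^ l) *
        ∏ m ∈ Finset.range t, (if Nat.testBit (j + 2 ^ l) m then Wd v m else 1) from rfl, hprod]
    ring
  have hcoef : ∀ j : ℕ,
      ((∑ l ∈ Finset.range t, if Nat.testBit j l then 0 else dDeriv v d t (j + 2 ^ l))
        / (∏ m ∈ Finset.range t, if Nat.testBit j m then Wd v m else 1))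
      = ∑ l ∈ Finset.range t, if Nat.testBit j l then 0 else d (j + 2 ^ l) * Wd v l := by
    intro j
    have hs : (∑ l ∈ Finset.range t, if Nat.testBit j l then 0 else dDeriv v d t (j + 2 ^ l))
        = (∑ l ∈ Finset.range t, if Nat.testBit j l then 0 else d (j + 2 ^ l) * Wd v l)
          * ∏ m ∈ Finset.range t, (if Nat.testBit j m then Wd v m else 1) := by
      rw [Finset.sum_mul]
      apply Finset.sum_congr rfl
      intro l hl
      by_cases hb : Nat.testBit j l
      · simp [hb]
      · rw [if_neg hb, if_neg hb, hdd j l (Finset.mem_range.1 hl) (by simpa using hb)]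
    rw [hs, mul_div_cancel_right₀ _ (hPne j)]
  have hL : ∀ i ∈ Finset.range (2 ^ t),
      Polynomial.derivative (Polynomial.C (d i) * Xpoly v i)
        = ∑ l ∈ Finset.range r, if Nat.testBit i l then
            Polynomial.C (d i) * (Polynomial.C (Wd v l) * Xpoly v (i - 2 ^ l)) else 0 := by
    intro i _
    rw [Polynomial.derivative_C_mul, Xpoly_deriv v i, Finset.mul_sum]
    apply Finset.sum_congr rfl
    intro l _
    by_cases hb : Nat.testBit i l
    · rw [if_pos hb, if_pos hb]
    · rw [if_neg hb, if_neg hb, mul_zero]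
  have hR : ∀ j ∈ Finset.range (2 ^ t),
      (Polynomial.C
          ((∑ l ∈ Finset.range t, if Nat.testBit j l then 0 else dDeriv v d t (j + 2 ^ l))
            / (∏ m ∈ Finset.range t, if Nat.testBit j m then Wd v m else 1))
        * Xpoly v j)
      = ∑ l ∈ Finset.range t, if Nat.testBit j l then 0 else
          Polynomial.C (d (j + 2 ^ l) * Wd v l) * Xpoly v j := by
    intro j _
    rw [hcoef j, map_sum, Finset.sum_mul]
    apply Finset.sum_congr rfl
    intro l _
    by_cases hb : Nat.testBit j l
    · simp [hb]
    · rw [if_neg hb, if_neg hb]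
  calc Polynomial.derivative (∑ i ∈ Finset.range (2 ^ t), Polynomial.C (d i) * Xpoly v i)
      = ∑ p ∈ ((Finset.range (2 ^ t)) ×ˢ (Finset.range r)).filter
            (fun p => Nat.testBit p.1 p.2),
          Polynomial.C (d p.1) * (Polynomial.C (Wd v p.2) * Xpoly v (p.1 - 2 ^ p.2)) := by
        rw [Polynomial.derivative_sum, Finset.sum_congr rfl hL, ← Finset.sum_product',
          ← Finset.sum_filter]
    _ = ∑ p ∈ ((Finset.range (2 ^ t)) ×ˢ (Finset.range t)).filter
            (fun p => ¬ Nat.testBit p.1 p.2),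
          Polynomial.C (d (p.1 + 2 ^ p.2) * Wd v p.2) * Xpoly v p.1 := by
        symm
        refine Finset.sum_bij' (fun p _ => (p.1 + 2 ^ p.2, p.2))
          (fun p _ => (p.1 - 2 ^ p.2, p.2)) ?_ ?_ ?_ ?_ ?_
        · rintro ⟨j, l⟩ hjl
          simp only [Finset.mem_filter, Finset.mem_product, Finset.mem_range] at hjl ⊢
          obtain ⟨⟨hj1, hl1⟩, hb⟩ := hjl
          have hb' : Nat.testBit j l = false := by simpa using hb
          refine ⟨⟨add_pow_lt hj1 hl1 hb', by omega⟩, ?_⟩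
          simp [bit_add_pow hb']
        · rintro ⟨i, l⟩ hil
          simp only [Finset.mem_filter, Finset.mem_product, Finset.mem_range] at hil ⊢
          obtain ⟨⟨hi1, hl1⟩, hb⟩ := hil
          have hge := Nat.ge_two_pow_of_testBit hb
          have hlt : l < t := by
            by_contra hge2
            push_neg at hge2
            have h2 := Nat.pow_le_pow_right (show 0 < 2 by norm_num) hge2
            omega
          exact ⟨⟨lt_of_le_of_lt (Nat.sub_le _ _) hi1, hlt⟩, by simp [sub_bit hb]⟩
        · rintro ⟨j, l⟩ hjl
          simp
        · rintro ⟨i, l⟩ hil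
          simp only [Finset.mem_filter, Finset.mem_product, Finset.mem_range] at hil
          have hge := Nat.ge_two_pow_of_testBit hil.2
          simp only [Prod.mk.injEq]
          constructor
          · omega
          · trivial
        · rintro ⟨j, l⟩ hjl
          simp only [Nat.add_sub_cancel, map_mul]
          ring
    _ = ∑ j ∈ Finset.range (2 ^ t),
          Polynomial.C
              ((∑ l ∈ Finset.range t, if Nat.testBit j l then 0 else dDeriv v d t (j + 2 ^ l))
                / (∏ m ∈ Finset.range t, if Nat.testBit j m then Wd v m else 1))
            * Xpoly v j := by
        rw [Finset.sum_filter]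
        refine (Finset.sum_product' (Finset.range (2 ^ t)) (Finset.range t)
          (fun j l => if ¬ Nat.testBit j l = true
            then Polynomial.C (d (j + 2 ^ l) * Wd v l) * Xpoly v j else 0)).trans ?_
        apply Finset.sum_congr rfl
        intro j hj
        rw [hR j hj]
        apply Finset.sum_congr rfl
        intro l _
        by_cases hb : Nat.testBit j l <;> simp [hb]
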